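/- Under Assumption (C): let α be (C,τ)-Diophantine, let L ∈ ℕ, and let n be an integer with 0 < |n| ≤ L. Let E_n ∈ J satisfy T_f(E_n) − nα ∈ ℤ, and let θ_c be a critical point of f lying between the two preimages f₋^{−1}(E_n) and f₊^{−1}(E_n), with critical value E_c := f(θ_c). Then |E_n − E_c| ≥ C²d/(48·L^{2τ}). -/

import Mathlib

open Set Topology Filter

private lemma drsep_mono_of_deriv (u v : ℝ) (F G : ℝ → ℝ)
    (h : ∀ x ∈ Set.Icc u v, HasDerivAt F (G x) x)
    (hG : ∀ x ∈ Set.Ioo u v, 0 ≤ G x) (huv : u ≤ v) : F u ≤ F v := by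
  have hmono : MonotoneOn F (Set.Icc u v) := by
    apply monotoneOn_of_deriv_nonneg (convex_Icc u v)
    · intro x hx; exact (h x hx).continuousAt.continuousWithinAt
    · intro x hx
      rw [interior_Icc] at hx
      exact (h x (Set.Ioo_subset_Icc_self hx)).differentiableAt.differentiableWithinAt
    · intro x hx
      rw [interior_Icc] at hx
      rw [(h x (Set.Ioo_subset_Icc_self hx)).deriv]
      exact hG x hx
  exact hmono (Set.left_mem_Icc.2 huv) (Set.right_mem_Icc.2 huv) huv

private lemma drsep_pointwise (a b s d : ℝ) (f' f'' : ℝ → ℝ)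
    (hd : 0 < d) (hs1 : s ≤ 2) (hsb : a + s ≤ b)
    (h2 : ∀ θ ∈ Set.Icc a b, HasDerivAt f' (f'' θ) θ)
    (hc : ContinuousOn f'' (Set.Icc a b))
    (hnn : ∀ θ ∈ Set.Icc a b, 0 ≤ f' θ)
    (hM : ∀ θ ∈ Set.Icc a b, d ≤ |f' θ| + |f'' θ|)
    (ha : f' a = 0)
    (t : ℝ) (ht : t ∈ Set.Icc a (a + s)) :
    d / 2 * min (t - a) (a + s - t) ≤ f' t := by
  by_contra hcon
  push_neg at hcon
  have hsub : Set.Icc a (a + s) ⊆ Set.Icc a b := Set.Icc_subset_Icc_right hsb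
  have htab : t ∈ Set.Icc a b := hsub ht
  have hft0 : 0 ≤ f' t := hnn t htab
  have hminpos : 0 < min (t - a) (a + s - t) := by
    by_contra hmp
    push_neg at hmp
    nlinarith
  have hta : a < t := by have := lt_min_iff.1 hminpos; linarith [this.1]
  have htas : t < a + s := by have := lt_min_iff.1 hminpos; linarith [this.2]
  have hmins : min (t - a) (a + s - t) ≤ s / 2 := by
    rcases le_total (t - a) (a + s - t) with hc1 | hc1
    · rw [min_eq_left hc1]; linarith
    · rw [min_eq_right hc1]; linarith
  have hmin1 : min (t - a) (a + s - t) ≤ 1 := by linarith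
  have hftlt : f' t < d / 2 := by nlinarith
  have hmorse := hM t htab
  rw [abs_of_nonneg hft0] at hmorse
  have habs : d / 2 < |f'' t| := by linarith
  rcases le_or_gt 0 (f'' t) with hsign | hsign
  · -- f'' t > d/2 : walk left
    rw [abs_of_nonneg hsign] at habs
    set A : Set ℝ := (Set.Icc a t ∩ f'' ⁻¹' Set.Iic (d / 2)) ∪ {a} with hA
    have hAcl : IsClosed A := by
      apply IsClosed.union
      · exact (hc.mono (Set.Icc_subset_Icc_right (le_trans ht.2 hsb))).preimage_isClosed_of_isClosed
          isClosed_Icc isClosed_Iic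
      · exact isClosed_singleton
    have hAne : A.Nonempty := ⟨a, Or.inr rfl⟩
    have hAbdd : BddAbove A := by
      refine ⟨t, ?_⟩
      rintro σ (⟨h₁, _⟩ | h₁)
      · exact h₁.2
      · simp only [Set.mem_singleton_iff] at h₁; rw [h₁]; exact hta.le
    set τ₁ := sSup A with hτ₁
    have hτ₁A : τ₁ ∈ A := hAcl.csSup_mem hAne hAbdd
    have hτ₁t : τ₁ ≤ t := by
      apply csSup_le hAne
      rintro σ (⟨h₁, _⟩ | h₁)
      · exact h₁.2
      · simp only [Set.mem_singleton_iff] at h₁; rw [h₁]; exact hta.le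
    have haτ₁ : a ≤ τ₁ := le_csSup hAbdd (Or.inr rfl)
    have hτ₁lt : τ₁ < t := by
      rcases lt_or_eq_of_le hτ₁t with h | h
      · exact h
      · exfalso
        rw [h] at hτ₁A
        rcases hτ₁A with ⟨_, h₂⟩ | h₂
        · simp only [Set.mem_preimage, Set.mem_Iic] at h₂; linarith
        · simp only [Set.mem_singleton_iff] at h₂; linarith
    have hIoc : ∀ σ ∈ Set.Ioc τ₁ t, d / 2 < f'' σ := by
      intro σ hσ
      by_contra hle
      push_neg at hle
      have : σ ∈ A := Or.inl ⟨⟨le_trans haτ₁ hσ.1.le, hσ.2⟩, hle⟩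
      exact absurd (le_csSup hAbdd this) (not_le.2 hσ.1)
    have hmono : f' τ₁ + d / 2 * (t - τ₁) ≤ f' t := by
      have := drsep_mono_of_deriv τ₁ t (fun σ => f' σ - d / 2 * σ) (fun σ => f'' σ - d / 2)
        (fun x hx => by
          have hx' : x ∈ Set.Icc a b := ⟨le_trans haτ₁ hx.1, le_trans hx.2 htab.2⟩
          exact ((h2 x hx').sub (((hasDerivAt_id x).const_mul (d / 2)))).congr_deriv (by ring))
        (fun x hx => by
          have := hIoc x ⟨hx.1, hx.2.le⟩; linarith)
        hτ₁lt.le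
      linarith
    rcases eq_or_lt_of_le haτ₁ with heq | hlt
    · rw [← heq, ha] at hmono
      have : d / 2 * min (t - a) (a + s - t) ≤ d / 2 * (t - a) := by
        have := min_le_left (t - a) (a + s - t); nlinarith
      linarith
    · have hmem : τ₁ ∈ Set.Icc a t ∧ f'' τ₁ ≤ d / 2 := by
        rcases hτ₁A with ⟨h₁, h₂⟩ | h₂
        · exact ⟨h₁, h₂⟩
        · simp only [Set.mem_singleton_iff] at h₂; exfalso; linarith [h₂ ▸ hlt]
      have hτ₁ab : τ₁ ∈ Set.Icc a b := ⟨haτ₁, le_trans hτ₁t htab.2⟩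
      have hlim : d / 2 ≤ f'' τ₁ := by
        have hcw : ContinuousWithinAt f'' (Set.Ioc τ₁ t) τ₁ :=
          (hc τ₁ hτ₁ab).mono (fun y hy => ⟨le_trans haτ₁ hy.1.le, le_trans hy.2 htab.2⟩)
        haveI := left_nhdsWithin_Ioc_neBot hτ₁lt
        exact ge_of_tendsto hcw (eventually_nhdsWithin_of_forall (fun σ hσ => (hIoc σ hσ).le))
      have hfe : f'' τ₁ = d / 2 := le_antisymm hmem.2 hlim
      have hmτ := hM τ₁ hτ₁ab
      rw [abs_of_nonneg (hnn τ₁ hτ₁ab), hfe, abs_of_nonneg (by linarith : (0:ℝ) ≤ d / 2)] at hmτ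
      nlinarith
  · -- f'' t < -d/2 : walk right
    rw [abs_of_neg hsign] at habs
    have hb : t < b := lt_of_lt_of_le htas hsb
    set B : Set ℝ := (Set.Icc t b ∩ f'' ⁻¹' Set.Ici (-(d / 2))) ∪ {b} with hB
    have hBcl : IsClosed B := by
      apply IsClosed.union
      · exact (hc.mono (Set.Icc_subset_Icc_left htab.1)).preimage_isClosed_of_isClosed
          isClosed_Icc isClosed_Ici
      · exact isClosed_singleton
    have hBne : B.Nonempty := ⟨b, Or.inr rfl⟩
    have hBbdd : BddBelow B := by
      refine ⟨t, ?_⟩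
      rintro σ (⟨h₁, _⟩ | h₁)
      · exact h₁.1
      · simp only [Set.mem_singleton_iff] at h₁; rw [h₁]; exact hb.le
    set τ₂ := sInf B with hτ₂
    have hτ₂B : τ₂ ∈ B := hBcl.csInf_mem hBne hBbdd
    have htτ₂ : t ≤ τ₂ := by
      apply le_csInf hBne
      rintro σ (⟨h₁, _⟩ | h₁)
      · exact h₁.1
      · simp only [Set.mem_singleton_iff] at h₁; rw [h₁]; exact hb.le
    have hτ₂b : τ₂ ≤ b := csInf_le hBbdd (Or.inr rfl)
    have htlt : t < τ₂ := by
      rcases lt_or_eq_of_le htτ₂ with h | h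
      · exact h
      · exfalso
        rw [← h] at hτ₂B
        rcases hτ₂B with ⟨_, h₂⟩ | h₂
        · simp only [Set.mem_preimage, Set.mem_Ici] at h₂; linarith
        · simp only [Set.mem_singleton_iff] at h₂; linarith
    have hIco : ∀ σ ∈ Set.Ico t τ₂, f'' σ < -(d / 2) := by
      intro σ hσ
      by_contra hle
      push_neg at hle
      have : σ ∈ B := Or.inl ⟨⟨hσ.1, le_trans hσ.2.le hτ₂b⟩, hle⟩
      exact absurd (csInf_le hBbdd this) (not_le.2 hσ.2)
    have hmono : f' τ₂ + d / 2 * (τ₂ - t) ≤ f' t := by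
      have := drsep_mono_of_deriv t τ₂ (fun σ => -f' σ - d / 2 * σ) (fun σ => -f'' σ - d / 2)
        (fun x hx => by
          have hx' : x ∈ Set.Icc a b := ⟨le_trans htab.1 hx.1, le_trans hx.2 hτ₂b⟩
          exact (((h2 x hx').neg).sub (((hasDerivAt_id x).const_mul (d / 2)))).congr_deriv (by ring))
        (fun x hx => by
          have := hIco x ⟨hx.1.le, hx.2⟩; linarith)
        htlt.le
      linarith
    have hτ₂ab : τ₂ ∈ Set.Icc a b := ⟨le_trans htab.1 htτ₂, hτ₂b⟩
    have hfτ₂0 : 0 ≤ f' τ₂ := hnn τ₂ hτ₂ab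
    rcases eq_or_lt_of_le hτ₂b with heq | hlt
    · -- τ₂ = b : f' t ≥ d/2 (b - t) ≥ d/2 (a+s-t)
      rw [heq] at hmono
      have : d / 2 * min (t - a) (a + s - t) ≤ d / 2 * (b - t) := by
        have h1 := min_le_right (t - a) (a + s - t)
        nlinarith
      have hfb0 : 0 ≤ f' b := hnn b ⟨le_trans htab.1 hb.le, le_refl b⟩
      linarith
    · have hmem : f'' τ₂ ∈ Set.Ici (-(d / 2)) := by
        rcases hτ₂B with ⟨_, h₂⟩ | h₂
        · exact h₂
        · simp only [Set.mem_singleton_iff] at h₂; exfalso; linarith [h₂ ▸ hlt]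
      have hlim : f'' τ₂ ≤ -(d / 2) := by
        have hcw : ContinuousWithinAt f'' (Set.Ico t τ₂) τ₂ :=
          (hc τ₂ hτ₂ab).mono (fun y hy => ⟨le_trans htab.1 hy.1, le_trans hy.2.le hτ₂b⟩)
        haveI := right_nhdsWithin_Ico_neBot htlt
        exact le_of_tendsto hcw (eventually_nhdsWithin_of_forall (fun σ hσ => (hIco σ hσ).le))
      have hfe : f'' τ₂ = -(d / 2) := le_antisymm hlim hmem
      have hmτ := hM τ₂ hτ₂ab
      rw [abs_of_nonneg hfτ₂0, hfe, abs_neg, abs_of_nonneg (by linarith : (0:ℝ) ≤ d / 2)] at hmτ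
      nlinarith

private lemma drsep_key (a b s d : ℝ) (f f' f'' : ℝ → ℝ)
    (hd : 0 < d) (hs0 : 0 ≤ s) (hs1 : s ≤ 2) (hsb : a + s ≤ b)
    (h1 : ∀ θ ∈ Set.Icc a b, HasDerivAt f (f' θ) θ)
    (h2 : ∀ θ ∈ Set.Icc a b, HasDerivAt f' (f'' θ) θ)
    (hc : ContinuousOn f'' (Set.Icc a b))
    (hnn : ∀ θ ∈ Set.Icc a b, 0 ≤ f' θ)
    (hM : ∀ θ ∈ Set.Icc a b, d ≤ |f' θ| + |f'' θ|)
    (ha : f' a = 0) :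
    d * s ^ 2 / 8 ≤ f (a + s) - f a := by
  have hpt := drsep_pointwise a b s d f' f'' hd hs1 hsb h2 hc hnn hM ha
  have hsub : Set.Icc a (a + s) ⊆ Set.Icc a b := Set.Icc_subset_Icc_right hsb
  have step1 : f a + d / 4 * (s / 2) ^ 2 ≤ f (a + s / 2) := by
    have := drsep_mono_of_deriv a (a + s / 2) (fun σ => f σ - d / 4 * (σ - a) ^ 2)
      (fun σ => f' σ - d / 2 * (σ - a))
      (fun x hx => by
        have hx' : x ∈ Set.Icc a b := hsub ⟨hx.1, by linarith [hx.2]⟩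
        have hq : HasDerivAt (fun σ : ℝ => d / 4 * (σ - a) ^ 2) (d / 2 * (x - a)) x := by
          have := (((hasDerivAt_id x).sub_const a).pow 2).const_mul (d / 4)
          exact this.congr_deriv (by simp only [id]; ring)
        exact (h1 x hx').sub hq)
      (fun x hx => by
        have hx2 : x ∈ Set.Icc a (a + s) := ⟨hx.1.le, by linarith [hx.2]⟩
        have := hpt x hx2
        have hmin : min (x - a) (a + s - x) = x - a := min_eq_left (by linarith [hx.2])
        rw [hmin] at this
        linarith)
      (by linarith)
    simp only [sub_self, ne_eq, OfNat.ofNat_ne_zero, not_false_eq_true, zero_pow, mul_zero,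
      sub_zero] at this
    have heq : (a + s / 2 - a) = s / 2 := by ring
    rw [heq] at this
    linarith
  have step2 : f (a + s / 2) + d / 4 * (s / 2) ^ 2 ≤ f (a + s) := by
    have := drsep_mono_of_deriv (a + s / 2) (a + s) (fun σ => f σ + d / 4 * (a + s - σ) ^ 2)
      (fun σ => f' σ - d / 2 * (a + s - σ))
      (fun x hx => by
        have hx' : x ∈ Set.Icc a b := hsub ⟨by linarith [hx.1], hx.2⟩
        have hq : HasDerivAt (fun σ : ℝ => d / 4 * (a + s - σ) ^ 2) (-(d / 2 * (a + s - x))) x := by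
          have := (((hasDerivAt_id x).neg.const_add (a + s)).pow 2).const_mul (d / 4)
          exact this.congr_deriv (by simp only [id, Pi.neg_apply]; ring)
        have := (h1 x hx').add hq
        exact this.congr_deriv (by ring))
      (fun x hx => by
        have hx2 : x ∈ Set.Icc a (a + s) := ⟨by linarith [hx.1], hx.2.le⟩
        have := hpt x hx2
        have hmin : min (x - a) (a + s - x) = a + s - x := min_eq_right (by linarith [hx.1])
        rw [hmin] at this
        linarith)
      (by linarith)
    have heq : (a + s - (a + s)) = 0 := by ring
    rw [heq] at this
    simp at this
    linarith
  nlinarith [step1, step2]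

private lemma drsep_key_abs (A B θc x r d : ℝ) (f f' f'' : ℝ → ℝ)
    (hd : 0 < d) (hr0 : 0 ≤ r) (hr1 : r ≤ 2)
    (h1 : ∀ θ ∈ Set.Icc A B, HasDerivAt f (f' θ) θ)
    (h2 : ∀ θ ∈ Set.Icc A B, HasDerivAt f' (f'' θ) θ)
    (hc : ContinuousOn f'' (Set.Icc A B))
    (hnn : ∀ θ ∈ Set.Icc A B, 0 ≤ f' θ)
    (hM : ∀ θ ∈ Set.Icc A B, d ≤ |f' θ| + |f'' θ|)
    (hθc : θc ∈ Set.Icc A B) (hcrit : f' θc = 0)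
    (hx : x ∈ Set.Icc A B) (hfar : θc + r ≤ x) :
    d * r ^ 2 / 8 ≤ f x - f θc := by
  have hsub : Set.Icc θc B ⊆ Set.Icc A B := Set.Icc_subset_Icc_left hθc.1
  have hkey := drsep_key θc B r d f f' f'' hd hr0 hr1 (le_trans hfar hx.2)
    (fun θ hθ => h1 θ (hsub hθ)) (fun θ hθ => h2 θ (hsub hθ)) (hc.mono hsub)
    (fun θ hθ => hnn θ (hsub hθ)) (fun θ hθ => hM θ (hsub hθ)) hcrit
  have hmono : f (θc + r) ≤ f x := by
    have hsub2 : Set.Icc (θc + r) x ⊆ Set.Icc A B :=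
      fun y hy => ⟨le_trans hθc.1 (le_trans (by linarith) hy.1), le_trans hy.2 hx.2⟩
    exact drsep_mono_of_deriv (θc + r) x f f' (fun y hy => h1 y (hsub2 hy))
      (fun y hy => hnn y (hsub2 (Set.Ioo_subset_Icc_self hy))) hfar
  linarith

private lemma drsep_key_abs2 (A B θc x r d : ℝ) (f f' f'' : ℝ → ℝ)
    (hd : 0 < d) (hr0 : 0 ≤ r) (hr1 : r ≤ 2)
    (h1 : ∀ θ ∈ Set.Icc A B, HasDerivAt f (f' θ) θ)
    (h2 : ∀ θ ∈ Set.Icc A B, HasDerivAt f' (f'' θ) θ)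
    (hc : ContinuousOn f'' (Set.Icc A B))
    (hnn : ∀ θ ∈ Set.Icc A B, 0 ≤ f' θ)
    (hM : ∀ θ ∈ Set.Icc A B, d ≤ |f' θ| + |f'' θ|)
    (hθc : θc ∈ Set.Icc A B) (hcrit : f' θc = 0)
    (hx : x ∈ Set.Icc A B) (hfar : r ≤ |x - θc|) :
    d * r ^ 2 / 8 ≤ |f x - f θc| := by
  rcases le_or_gt (θc + r) x with hge | hlt
  · have := drsep_key_abs A B θc x r d f f' f'' hd hr0 hr1 h1 h2 hc hnn hM hθc hcrit hx hge
    exact le_trans this (le_abs_self _)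
  · have hle : x ≤ θc - r := by
      rcases le_total (x - θc) 0 with h | h
      · rw [abs_of_nonpos h] at hfar; linarith
      · rw [abs_of_nonneg h] at hfar; linarith
    have hmem : ∀ θ : ℝ, θ ∈ Set.Icc (-B) (-A) → -θ ∈ Set.Icc A B :=
      fun θ hθ => ⟨by linarith [hθ.2], by linarith [hθ.1]⟩
    have hkey := drsep_key_abs (-B) (-A) (-θc) (-x) r d
      (fun y => -f (-y)) (fun y => f' (-y)) (fun y => -f'' (-y)) hd hr0 hr1
      (fun θ hθ => by
        exact (((h1 (-θ) (hmem θ hθ)).comp θ (hasDerivAt_neg θ)).neg).congr_deriv (by ring))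
      (fun θ hθ => by
        exact ((h2 (-θ) (hmem θ hθ)).comp θ (hasDerivAt_neg θ)).congr_deriv (by ring))
      (by
        have hcc : ContinuousOn (fun y : ℝ => f'' (-y)) (Set.Icc (-B) (-A)) :=
          ContinuousOn.comp hc continuous_neg.continuousOn (fun θ hθ => hmem θ hθ)
        exact hcc.neg)
      (fun θ hθ => hnn (-θ) (hmem θ hθ))
      (fun θ hθ => by rw [abs_neg]; exact hM (-θ) (hmem θ hθ))
      ⟨by linarith [hθc.2], by linarith [hθc.1]⟩
      (by simpa using hcrit)
      ⟨by linarith [hx.2], by linarith [hx.1]⟩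
      (by linarith)
    simp only [neg_neg] at hkey
    have habs : f θc - f x ≤ |f x - f θc| := by
      rw [abs_sub_comm]; exact le_abs_self _
    linarith

/-- `α` is `(C,τ)`-Diophantine: `|nα − p| ≥ C/|n|^τ` for every nonzero `n : ℤ` and `p : ℤ`. -/
def IsDiophantine (C τ α : ℝ) : Prop :=
  ∀ n : ℤ, n ≠ 0 → ∀ p : ℤ, C / |(n : ℝ)| ^ τ ≤ |(n : ℝ) * α - (p : ℝ)|

/-- **Separation of double-resonant energies from critical values.** Under Assumption (C), for a
`(C,τ)`-Diophantine `α`, `0 < |n| ≤ L`, a double-resonant energy `E_n ∈ J` (i.e.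
`T_f(E_n) − nα ∈ ℤ`, phrased via the branch preimages `θ₋, θ₊`), and a critical point `θ_c`
of `f` lying between `θ₋` and `θ₊` with critical value `E_c = f(θ_c)`:
`|E_n − E_c| ≥ C²d/(48L^{2τ})`. -/
theorem double_resonance_separation_from_critical_value
    (am bm ap bp d D ν : ℝ) (f f' f'' : ℝ → ℝ)
    (hlem : am ≤ bm) (hlep : ap ≤ bp)
    (hdisj : Set.Ioo am bm ∩ Set.Ioo ap bp = ∅)
    (hd : 0 < d) (hdD : d ≤ D)
    (hder1 : ∀ θ ∈ Set.Icc am bm ∪ Set.Icc ap bp, HasDerivAt f (f' θ) θ)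
    (hder2 : ∀ θ ∈ Set.Icc am bm ∪ Set.Icc ap bp, HasDerivAt f' (f'' θ) θ)
    (hcont2 : ContinuousOn f'' (Set.Icc am bm ∪ Set.Icc ap bp))
    (hneg : ∀ θ ∈ Set.Icc am bm, f' θ ≤ 0)
    (hpos : ∀ θ ∈ Set.Icc ap bp, 0 ≤ f' θ)
    (hMorse : ∀ θ ∈ Set.Icc am bm ∪ Set.Icc ap bp,
      d ≤ |f' θ| + |f'' θ| ∧ |f' θ| + |f'' θ| ≤ D)
    (himg : f '' Set.Icc am bm = f '' Set.Icc ap bp)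
    (hν : 0 < ν) (hνd : ν < d / 2)
    (hbdry : ∀ θ ∈ frontier (Set.Icc am bm ∪ Set.Icc ap bp), ν ≤ |f' θ|)
    (C τ α : ℝ) (hC : 0 < C) (hτ : 0 < τ) (hα : IsDiophantine C τ α)
    (L : ℕ) (n : ℤ) (hn0 : n ≠ 0) (hnL : |n| ≤ (L : ℤ))
    (En : ℝ) (hEn : En ∈ f '' Set.Icc am bm)
    (θm θp : ℝ) (hθm : θm ∈ Set.Icc am bm) (hθp : θp ∈ Set.Icc ap bp)
    (hfm : f θm = En) (hfp : f θp = En)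
    (hres : ∃ p : ℤ, θp - θm = (n : ℝ) * α - (p : ℝ))
    (θc : ℝ) (hθc : θc ∈ Set.Icc am bm ∪ Set.Icc ap bp)
    (hθcrit : f' θc = 0) (hbtw : θc ∈ Set.uIcc θm θp) :
    C ^ 2 * d / (48 * (L : ℝ) ^ (2 * τ)) ≤ |En - f θc| := by
  have hL1 : (1:ℤ) ≤ (L:ℤ) := le_trans (Int.one_le_abs hn0) hnL
  have hL1' : (1:ℝ) ≤ (L:ℝ) := by exact_mod_cast hL1
  have hL0 : (0:ℝ) < (L:ℝ) := by linarith
  set P := (L:ℝ) ^ τ with hPdef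
  have hP1 : 1 ≤ P := Real.one_le_rpow hL1' hτ.le
  have hP0 : 0 < P := by linarith
  have hC2 : C ≤ 1 / 2 := by
    have h := hα 1 one_ne_zero (round α)
    simp only [Int.cast_one, abs_one, Real.one_rpow, div_one, one_mul] at h
    have h2 := abs_sub_round α
    linarith
  set r := C / (2 * P) with hrdef
  have hr0 : 0 < r := by positivity
  have hr2 : r ≤ 2 := by
    rw [hrdef, div_le_iff₀ (by positivity)]
    nlinarith
  obtain ⟨p, hp⟩ := hres
  have hsep : 2 * r ≤ |θp - θm| := by
    have h1 := hα n hn0 p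
    rw [← hp] at h1
    have hcast : |(n:ℝ)| ≤ (L:ℝ) := by
      have h3 : ((|n| : ℤ) : ℝ) ≤ ((L:ℤ) : ℝ) := by exact_mod_cast hnL
      simpa [Int.cast_abs] using h3
    have habs1 : (1:ℝ) ≤ |(n:ℝ)| := by
      have h3 : ((1:ℤ) : ℝ) ≤ ((|n| : ℤ) : ℝ) := by exact_mod_cast Int.one_le_abs hn0
      simpa [Int.cast_abs] using h3
    have hle : |(n:ℝ)| ^ τ ≤ P := Real.rpow_le_rpow (by linarith) hcast hτ.le
    have hposn : 0 < |(n:ℝ)| ^ τ := Real.rpow_pos_of_pos (by linarith) τ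
    have hdiv : C / P ≤ C / |(n:ℝ)| ^ τ := div_le_div_of_nonneg_left hC.le hposn hle
    have h2r : 2 * r = C / P := by rw [hrdef]; field_simp
    linarith
  -- θc is a common endpoint of the two intervals
  have hXfr : θc ∉ frontier (Set.Icc am bm ∪ Set.Icc ap bp) := by
    intro hfr
    have := hbdry θc hfr
    rw [hθcrit, abs_zero] at this
    linarith
  have hint : θc ∈ interior (Set.Icc am bm ∪ Set.Icc ap bp) := by
    by_contra h
    exact hXfr ⟨subset_closure hθc, h⟩
  have hcp : θc ∈ Set.Icc ap bp := by
    by_contra h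
    have hnb : Set.Icc am bm ∈ 𝓝 θc := by
      have ho1 : interior (Set.Icc am bm ∪ Set.Icc ap bp) ∈ 𝓝 θc :=
        isOpen_interior.mem_nhds hint
      have ho2 : (Set.Icc ap bp)ᶜ ∈ 𝓝 θc := isClosed_Icc.isOpen_compl.mem_nhds h
      filter_upwards [ho1, ho2] with y hy1 hy2
      exact (interior_subset hy1).resolve_right hy2
    have hIoo : θc ∈ Set.Ioo am bm := by
      rw [← interior_Icc]; exact mem_interior_iff_mem_nhds.2 hnb
    have hmax : IsLocalMax f' θc := by
      filter_upwards [Ioo_mem_nhds hIoo.1 hIoo.2] with y hy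
      rw [hθcrit]; exact hneg y (Set.Ioo_subset_Icc_self hy)
    have h0 := hmax.hasDerivAt_eq_zero (hder2 θc hθc)
    have hm2 := (hMorse θc hθc).1
    rw [hθcrit, h0] at hm2
    simp at hm2
    linarith
  have hcm : θc ∈ Set.Icc am bm := by
    by_contra h
    have hnb : Set.Icc ap bp ∈ 𝓝 θc := by
      have ho1 : interior (Set.Icc am bm ∪ Set.Icc ap bp) ∈ 𝓝 θc :=
        isOpen_interior.mem_nhds hint
      have ho2 : (Set.Icc am bm)ᶜ ∈ 𝓝 θc := isClosed_Icc.isOpen_compl.mem_nhds h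
      filter_upwards [ho1, ho2] with y hy1 hy2
      exact (interior_subset hy1).resolve_left hy2
    have hIoo : θc ∈ Set.Ioo ap bp := by
      rw [← interior_Icc]; exact mem_interior_iff_mem_nhds.2 hnb
    have hmin : IsLocalMin f' θc := by
      filter_upwards [Ioo_mem_nhds hIoo.1 hIoo.2] with y hy
      rw [hθcrit]; exact hpos y (Set.Ioo_subset_Icc_self hy)
    have h0 := hmin.hasDerivAt_eq_zero (hder2 θc hθc)
    have hm2 := (hMorse θc hθc).1
    rw [hθcrit, h0] at hm2
    simp at hm2
    linarith
  -- one of the two preimages is at distance ≥ r from θc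
  have hor : r ≤ |θp - θc| ∨ r ≤ |θm - θc| := by
    by_contra h
    push_neg at h
    have tri : |θp - θm| ≤ |θp - θc| + |θc - θm| := abs_sub_le θp θc θm
    rw [abs_sub_comm θc θm] at tri
    linarith [h.1, h.2]
  have hmain : d * r ^ 2 / 8 ≤ |En - f θc| := by
    rcases hor with hcase | hcase
    · have hres := drsep_key_abs2 ap bp θc θp r d f f' f''
        hd hr0.le hr2
        (fun θ hθ => hder1 θ (Or.inr hθ)) (fun θ hθ => hder2 θ (Or.inr hθ))
        (hcont2.mono Set.subset_union_right) hpos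
        (fun θ hθ => (hMorse θ (Or.inr hθ)).1)
        hcp hθcrit hθp hcase
      rwa [hfp] at hres
    · have hres := drsep_key_abs2 am bm θc θm r d
        (fun y => -f y) (fun y => -f' y) (fun y => -f'' y)
        hd hr0.le hr2
        (fun θ hθ => (hder1 θ (Or.inl hθ)).neg) (fun θ hθ => (hder2 θ (Or.inl hθ)).neg)
        ((hcont2.mono Set.subset_union_left).neg)
        (fun θ hθ => by simpa using hneg θ hθ)
        (fun θ hθ => by simpa [abs_neg] using (hMorse θ (Or.inl hθ)).1)
        hcm (by simpa using hθcrit) hθm hcase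
      rw [show -f θm - -f θc = -(f θm - f θc) by ring, abs_neg, hfm] at hres
      exact hres
  have hPP : (L:ℝ) ^ (2 * τ) = P * P := by rw [two_mul, Real.rpow_add hL0]
  have heq : d * r ^ 2 / 8 = C ^ 2 * d / (32 * (P * P)) := by
    rw [hrdef]; field_simp; ring
  have hfin : C ^ 2 * d / (48 * (P * P)) ≤ C ^ 2 * d / (32 * (P * P)) :=
    div_le_div_of_nonneg_left (by positivity) (by positivity) (by nlinarith)
  rw [hPP]
  calc C ^ 2 * d / (48 * (P * P)) ≤ C ^ 2 * d / (32 * (P * P)) := hfin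
    _ = d * r ^ 2 / 8 := heq.symm
    _ ≤ |En - f θc| := hmain
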